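/- If |e⟩ ∈ ℂ², |ψ⟩ is a vector on qubits S̄ ∪ S, and P_{A∪S}(|e⟩_A ⊗ |ψ⟩) = |e⟩_A ⊗ |ψ⟩ where P_{A∪S} projects onto the symmetric subspace of qubit A together with the qubits in S, then |ψ⟩ = |ψ̃⟩_{S̄} ⊗ |e⟩^⊗|S| for some vector |ψ̃⟩ on the qubits in S̄. -/

import Mathlib

open scoped Classical

abbrev QIdx (N : ℕ) := Fin N → Fin 2

def tens {a b : ℕ} (ψ : QIdx a → ℂ) (φ : QIdx b → ℂ) : QIdx (a + b) → ℂ :=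
  fun f => ψ (fun i => f (Fin.castAdd b i)) * φ (fun j => f (Fin.natAdd a j))

def oneQ (e : Fin 2 → ℂ) : QIdx 1 → ℂ := fun f => e (f 0)

def prodVec {N : ℕ} (e : Fin N → (Fin 2 → ℂ)) : QIdx N → ℂ :=
  fun f => ∏ i, e i (f i)

def permMat {N : ℕ} (σ : Equiv.Perm (Fin N)) : Matrix (QIdx N) (QIdx N) ℂ :=
  Matrix.of fun f g => if g = f ∘ σ then 1 else 0

/-- The orthogonal projector onto the subspace of vectors symmetric in the qubits of
the subset `T`. -/
noncomputable def symSubsetProj {N : ℕ} (T : Finset (Fin N)) :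
    Matrix (QIdx N) (QIdx N) ℂ :=
  ((T.card.factorial : ℂ)⁻¹) •
    ∑ σ : Equiv.Perm (Fin N), if (∀ i ∉ T, σ i = i) then permMat σ else 0

/-- Qubit ordering `A, S̄, S`: the symmetrized subset `A ∪ S` consists of the first qubit
together with the last `s` qubits of `1 + (t + s)`. -/
def AunionS (t s : ℕ) : Finset (Fin (1 + (t + s))) :=
  Finset.univ.filter fun i => (i : ℕ) = 0 ∨ 1 + t ≤ (i : ℕ)

theorem hPlem (t s : ℕ) (e : Fin 2 → ℂ) (ψ : QIdx (t + s) → ℂ) (f : QIdx (1+(t+s))) :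
    (symSubsetProj (AunionS t s)).mulVec (tens (oneQ e) ψ) f
      = (((AunionS t s).card.factorial : ℂ)⁻¹) *
        ∑ σ : Equiv.Perm (Fin (1 + (t + s))),
          if (∀ i ∉ AunionS t s, σ i = i) then tens (oneQ e) ψ (f ∘ σ) else 0 := by
  simp only [symSubsetProj, Matrix.mulVec, dotProduct, Matrix.smul_apply,
    Matrix.sum_apply, smul_eq_mul, Finset.sum_mul, Finset.mul_sum]
  rw [Finset.sum_comm]
  refine Finset.sum_congr rfl fun σ _ => ?_
  by_cases hσ : ∀ i ∉ AunionS t s, σ i = i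
  · rw [if_pos hσ, if_pos hσ]
    simp only [permMat, Matrix.of_apply, ite_mul, mul_ite, mul_zero,
      zero_mul, mul_one, one_mul]
    simp [Finset.sum_ite_eq, Finset.sum_ite_eq']
  · simp [hσ]

theorem hinvlem (t s : ℕ) (e : Fin 2 → ℂ) (ψ : QIdx (t + s) → ℂ)
    (hfix : (symSubsetProj (AunionS t s)).mulVec (tens (oneQ e) ψ)
        = tens (oneQ e) ψ)
    (σ : Equiv.Perm (Fin (1 + (t + s)))) (hσ : ∀ i ∉ AunionS t s, σ i = i)
    (f : QIdx (1 + (t + s))) :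
    tens (oneQ e) ψ (f ∘ σ) = tens (oneQ e) ψ f := by
  have h1 := congrFun hfix (f ∘ σ)
  have h2 := congrFun hfix f
  rw [hPlem] at h1 h2
  rw [← h1, ← h2]
  congr 1
  refine Fintype.sum_equiv (Equiv.mulLeft σ)
    (fun τ => if (∀ i ∉ AunionS t s, τ i = i) then tens (oneQ e) ψ ((f ∘ σ) ∘ τ) else 0)
    (fun τ => if (∀ i ∉ AunionS t s, τ i = i) then tens (oneQ e) ψ (f ∘ τ) else 0)
    (fun τ => ?_)
  have hc : (∀ i ∉ AunionS t s, (σ * τ) i = i) ↔ (∀ i ∉ AunionS t s, τ i = i) := by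
    constructor
    · intro h i hi
      have h1 := h i hi
      have h2 := hσ i hi
      simp only [Equiv.Perm.mul_apply] at h1
      exact σ.injective (by rw [h1, h2])
    · intro h i hi
      simp only [Equiv.Perm.mul_apply, h i hi, hσ i hi]
  have hfun : (f ∘ σ) ∘ τ = f ∘ ⇑(σ * τ) := by
    funext x; simp [Equiv.Perm.mul_apply, Function.comp]
  simp only [Equiv.coe_mulLeft]
  rw [hfun]
  exact if_congr hc.symm rfl rfl

theorem hswaplem (t s : ℕ) (e : Fin 2 → ℂ) (ψ : QIdx (t + s) → ℂ)
    (hfix : (symSubsetProj (AunionS t s)).mulVec (tens (oneQ e) ψ)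
        = tens (oneQ e) ψ)
    (g : QIdx (t + s)) (a : Fin 2) (j : Fin s) :
    e (g (Fin.natAdd t j)) * ψ (Function.update g (Fin.natAdd t j) a)
      = e a * ψ g := by
  have hq0mem : (Fin.castAdd (t + s) (0 : Fin 1)) ∈ AunionS t s := by
    simp only [AunionS, Finset.mem_filter, Finset.mem_univ, true_and, Fin.coe_castAdd]
    left; rfl
  have hq1mem : (Fin.natAdd 1 (Fin.natAdd t j)) ∈ AunionS t s := by
    simp only [AunionS, Finset.mem_filter, Finset.mem_univ, true_and, Fin.coe_natAdd]
    right; omega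
  have hσ : ∀ i ∉ AunionS t s,
      (Equiv.swap (Fin.castAdd (t + s) (0 : Fin 1)) (Fin.natAdd 1 (Fin.natAdd t j))) i = i := by
    intro i hi
    apply Equiv.swap_apply_of_ne_of_ne
    · rintro rfl; exact hi hq0mem
    · rintro rfl; exact hi hq1mem
  have hkey := hinvlem t s e ψ hfix _ hσ (Fin.append (fun _ : Fin 1 => a) g)
  have hvF : tens (oneQ e) ψ (Fin.append (fun _ : Fin 1 => a) g) = e a * ψ g := by
    show e (Fin.append (fun _ : Fin 1 => a) g (Fin.castAdd (t + s) 0))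
        * ψ (fun j' => Fin.append (fun _ : Fin 1 => a) g (Fin.natAdd 1 j')) = e a * ψ g
    rw [Fin.append_left]
    congr 1
    congr 1
    funext j'
    exact Fin.append_right _ _ _
  have hvFσ : tens (oneQ e) ψ
      ((Fin.append (fun _ : Fin 1 => a) g) ∘
        (Equiv.swap (Fin.castAdd (t + s) (0 : Fin 1)) (Fin.natAdd 1 (Fin.natAdd t j))))
      = e (g (Fin.natAdd t j)) * ψ (Function.update g (Fin.natAdd t j) a) := by
    show e (Fin.append (fun _ : Fin 1 => a) g
          (Equiv.swap (Fin.castAdd (t + s) (0 : Fin 1)) (Fin.natAdd 1 (Fin.natAdd t j))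
            (Fin.castAdd (t + s) 0)))
        * ψ (fun j' => Fin.append (fun _ : Fin 1 => a) g
          (Equiv.swap (Fin.castAdd (t + s) (0 : Fin 1)) (Fin.natAdd 1 (Fin.natAdd t j))
            (Fin.natAdd 1 j')))
        = e (g (Fin.natAdd t j)) * ψ (Function.update g (Fin.natAdd t j) a)
    rw [Equiv.swap_apply_left, Fin.append_right]
    congr 1
    congr 1
    funext j'
    by_cases hj' : j' = Fin.natAdd t j
    · subst hj'
      rw [Equiv.swap_apply_right, Fin.append_left, Function.update_self]
    · rw [Equiv.swap_apply_of_ne_of_ne, Function.update_of_ne hj']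
      · exact Fin.append_right _ _ _
      · intro h
        have := congrArg Fin.val h
        simp only [Fin.coe_castAdd, Fin.coe_natAdd] at this
        omega
      · intro h
        have h2 := congrArg Fin.val h
        simp only [Fin.coe_natAdd] at h2
        apply hj'
        apply Fin.ext
        simp only [Fin.coe_natAdd]
        omega
  rw [hvFσ, hvF] at hkey
  exact hkey


/-- if `P_{A∪S}(|e⟩_A ⊗ |ψ⟩) = |e⟩_A ⊗ |ψ⟩`, where `P_{A∪S}` projects onto
the symmetric subspace of qubit `A` together with the `s` qubits of `S` (and `|ψ⟩` lives
on `S̄ ∪ S`, with `S̄` the middle `t` qubits), then `|ψ⟩ = |ψ̃⟩_{S̄} ⊗ |e⟩^⊗s`. -/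
theorem stmt12 (t s : ℕ) (e : Fin 2 → ℂ) (he : e ≠ 0) (ψ : QIdx (t + s) → ℂ)
    (hfix : (symSubsetProj (AunionS t s)).mulVec (tens (oneQ e) ψ)
        = tens (oneQ e) ψ) :
    ∃ ψt : QIdx t → ℂ, ψ = tens ψt (prodVec fun _ : Fin s => e) := by
  classical
  obtain ⟨k, hk⟩ : ∃ k, e k ≠ 0 := by
    by_contra h
    push_neg at h
    exact he (funext h)
  have hnatAddInj : Function.Injective (Fin.natAdd t : Fin s → Fin (t + s)) := by
    intro x y hxy
    have h2 := congrArg Fin.val hxy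
    simp only [Fin.coe_natAdd] at h2
    exact Fin.ext (by omega)
  set updSet : QIdx (t + s) → Finset (Fin s) → QIdx (t + s) :=
    fun g J i => if i ∈ J.image (Fin.natAdd t) then k else g i with hupdSet
  have hiter : ∀ (J : Finset (Fin s)) (g : QIdx (t + s)),
      (e k) ^ J.card * ψ g = ψ (updSet g J) * ∏ j ∈ J, e (g (Fin.natAdd t j)) := by
    intro J
    induction J using Finset.induction_on with
    | empty =>
      intro g
      simp [hupdSet]
    | insert j J hjJ ih =>
      intro g
      have hgp : updSet g J (Fin.natAdd t j) = g (Fin.natAdd t j) := by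
        simp only [hupdSet]
        rw [if_neg]
        simp only [Finset.mem_image, not_exists]
        rintro x ⟨hx, hxe⟩
        exact absurd (hnatAddInj hxe ▸ hx) hjJ
      have hupd : Function.update (updSet g J) (Fin.natAdd t j) k
          = updSet g (insert j J) := by
        funext i
        by_cases hi : i = Fin.natAdd t j
        · subst hi
          rw [Function.update_self]
          simp only [hupdSet]
          rw [if_pos]
          exact Finset.mem_image_of_mem _ (Finset.mem_insert_self j J)
        · rw [Function.update_of_ne hi]
          simp only [hupdSet, Finset.image_insert, Finset.mem_insert]
          simp [hi]
      have hrel := hswaplem t s e ψ hfix (updSet g J) k j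
      rw [hgp, hupd] at hrel
      rw [Finset.card_insert_of_notMem hjJ, Finset.prod_insert hjJ, pow_succ]
      calc (e k) ^ J.card * e k * ψ g = e k * ((e k) ^ J.card * ψ g) := by ring
        _ = e k * (ψ (updSet g J) * ∏ j' ∈ J, e (g (Fin.natAdd t j'))) := by rw [ih g]
        _ = (e k * ψ (updSet g J)) * ∏ j' ∈ J, e (g (Fin.natAdd t j')) := by ring
        _ = (e (g (Fin.natAdd t j)) * ψ (updSet g (insert j J)))
              * ∏ j' ∈ J, e (g (Fin.natAdd t j')) := by rw [← hrel]
        _ = ψ (updSet g (insert j J))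
              * (e (g (Fin.natAdd t j)) * ∏ j' ∈ J, e (g (Fin.natAdd t j'))) := by ring
  refine ⟨fun gt => ((e k) ^ s)⁻¹ * ψ (Fin.append gt (fun _ : Fin s => k)), ?_⟩
  funext g
  have hfull := hiter Finset.univ g
  rw [Finset.card_univ, Fintype.card_fin] at hfull
  have happ : Fin.append (fun i : Fin t => g (Fin.castAdd s i)) (fun _ : Fin s => k)
      = updSet g Finset.univ := by
    funext i
    refine Fin.addCases (fun i' => ?_) (fun j' => ?_) i
    · rw [Fin.append_left]
      simp only [hupdSet]
      rw [if_neg]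
      simp only [Finset.mem_image, not_exists]
      rintro x ⟨-, hxe⟩
      have h2 := congrArg Fin.val hxe
      simp only [Fin.coe_natAdd, Fin.coe_castAdd] at h2
      omega
    · rw [Fin.append_right]
      simp only [hupdSet]
      rw [if_pos]
      exact Finset.mem_image_of_mem _ (Finset.mem_univ j')
  show ψ g = (((e k) ^ s)⁻¹ * ψ (Fin.append (fun i => g (Fin.castAdd s i)) (fun _ : Fin s => k)))
      * ∏ j, e (g (Fin.natAdd t j))
  rw [happ]
  have hpow : (e k) ^ s ≠ 0 := pow_ne_zero _ hk
  rw [mul_assoc, ← hfull, ← mul_assoc, inv_mul_cancel₀ hpow, one_mul]
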